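/- The solution is uniformly bounded by its initial data: |x_i(t)| ≤ C_0 and |y_j(t)| ≤ C_0, for all t ≥ −τ when i = 1,…,k and j = 1,…,h, and for all t ≥ 0 when i = k+1,…,N and j = h+1,…,M. -/

import Mathlib

open Real Set Filter Topology
open scoped BigOperators RealInnerProductSpace

noncomputable section

/-- `Λ` : the maximum of the sup-norms of the four (positive) influence functions. -/
def Lam {d : ℕ} (ψ ψs φ φs : EuclideanSpace ℝ (Fin d) → EuclideanSpace ℝ (Fin d) → ℝ) : ℝ :=
  max
    (max (⨆ p : EuclideanSpace ℝ (Fin d) × EuclideanSpace ℝ (Fin d), ψ p.1 p.2)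
         (⨆ p : EuclideanSpace ℝ (Fin d) × EuclideanSpace ℝ (Fin d), ψs p.1 p.2))
    (max (⨆ p : EuclideanSpace ℝ (Fin d) × EuclideanSpace ℝ (Fin d), φ p.1 p.2)
         (⨆ p : EuclideanSpace ℝ (Fin d) × EuclideanSpace ℝ (Fin d), φs p.1 p.2))

/-- An influence function is admissible when it is continuous, positive and bounded. -/
def Admissible {d : ℕ} (f : EuclideanSpace ℝ (Fin d) → EuclideanSpace ℝ (Fin d) → ℝ) : Prop :=
  Continuous (fun p : EuclideanSpace ℝ (Fin d) × EuclideanSpace ℝ (Fin d) => f p.1 p.2) ∧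
    (∀ z₁ z₂, 0 < f z₁ z₂) ∧
    BddAbove (Set.range fun p : EuclideanSpace ℝ (Fin d) × EuclideanSpace ℝ (Fin d) => f p.1 p.2)

/-- `(x, y)` is a global classical solution of the two-population delayed
Hegselmann–Krause system, with `k` (resp. `h`) leaders in the first (resp. second)
population and time delay `τ`. -/
structure IsSol {d N M : ℕ} (h k : ℕ) (τ : ℝ)
    (ψ ψs φ φs : EuclideanSpace ℝ (Fin d) → EuclideanSpace ℝ (Fin d) → ℝ)
    (x : Fin N → ℝ → EuclideanSpace ℝ (Fin d))
    (y : Fin M → ℝ → EuclideanSpace ℝ (Fin d)) : Prop where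
  contx : ∀ i, Continuous (x i)
  conty : ∀ j, Continuous (y j)
  odex_lead : ∀ i : Fin N, (i : ℕ) < k → ∀ t : ℝ, 0 < t →
    HasDerivAt (x i)
      ((∑ j ∈ Finset.univ.erase i,
          (ψ (x i t) (x j t) / ((N : ℝ) + h - 1)) • (x j t - x i t)) +
        ∑ j ∈ Finset.univ.filter (fun j : Fin M => (j : ℕ) < h),
          (φ (x i t) (y j (t - τ)) / ((N : ℝ) + h - 1)) • (y j (t - τ) - x i t)) t
  odex_foll : ∀ i : Fin N, k ≤ (i : ℕ) → ∀ t : ℝ, 0 < t →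
    HasDerivAt (x i)
      (∑ j ∈ Finset.univ.erase i,
          (ψ (x i t) (x j t) / ((N : ℝ) - 1)) • (x j t - x i t)) t
  odey_lead : ∀ i : Fin M, (i : ℕ) < h → ∀ t : ℝ, 0 < t →
    HasDerivAt (y i)
      ((∑ j ∈ Finset.univ.erase i,
          (ψs (y i t) (y j t) / ((M : ℝ) + k - 1)) • (y j t - y i t)) +
        ∑ j ∈ Finset.univ.filter (fun j : Fin N => (j : ℕ) < k),
          (φs (y i t) (x j (t - τ)) / ((M : ℝ) + k - 1)) • (x j (t - τ) - y i t)) t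
  odey_foll : ∀ i : Fin M, h ≤ (i : ℕ) → ∀ t : ℝ, 0 < t →
    HasDerivAt (y i)
      (∑ j ∈ Finset.univ.erase i,
          (ψs (y i t) (y j t) / ((M : ℝ) - 1)) • (y j t - y i t)) t

/-- `m_0` : the minimum of the projections on `v` of the initial data. -/
def mInit {d N M : ℕ} (h k : ℕ) (τ : ℝ) (v : EuclideanSpace ℝ (Fin d))
    (x : Fin N → ℝ → EuclideanSpace ℝ (Fin d))
    (y : Fin M → ℝ → EuclideanSpace ℝ (Fin d)) : ℝ :=
  min
    (min (⨅ p : {i : Fin N // (i : ℕ) < k} × (Icc (-τ) (0 : ℝ)), ⟪x p.1.1 (p.2 : ℝ), v⟫)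
         (⨅ i : {i : Fin N // k ≤ (i : ℕ)}, ⟪x i.1 0, v⟫))
    (min (⨅ p : {j : Fin M // (j : ℕ) < h} × (Icc (-τ) (0 : ℝ)), ⟪y p.1.1 (p.2 : ℝ), v⟫)
         (⨅ j : {j : Fin M // h ≤ (j : ℕ)}, ⟪y j.1 0, v⟫))

/-- `M_0` : the maximum of the projections on `v` of the initial data. -/
def MInit {d N M : ℕ} (h k : ℕ) (τ : ℝ) (v : EuclideanSpace ℝ (Fin d))
    (x : Fin N → ℝ → EuclideanSpace ℝ (Fin d))
    (y : Fin M → ℝ → EuclideanSpace ℝ (Fin d)) : ℝ :=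
  max
    (max (⨆ p : {i : Fin N // (i : ℕ) < k} × (Icc (-τ) (0 : ℝ)), ⟪x p.1.1 (p.2 : ℝ), v⟫)
         (⨆ i : {i : Fin N // k ≤ (i : ℕ)}, ⟪x i.1 0, v⟫))
    (max (⨆ p : {j : Fin M // (j : ℕ) < h} × (Icc (-τ) (0 : ℝ)), ⟪y p.1.1 (p.2 : ℝ), v⟫)
         (⨆ j : {j : Fin M // h ≤ (j : ℕ)}, ⟪y j.1 0, v⟫))

/-- `C_0` : the maximum of the norms of the initial data. -/
def Cinit {d N M : ℕ} (h k : ℕ) (τ : ℝ)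
    (x : Fin N → ℝ → EuclideanSpace ℝ (Fin d))
    (y : Fin M → ℝ → EuclideanSpace ℝ (Fin d)) : ℝ :=
  max
    (max (⨆ p : {i : Fin N // (i : ℕ) < k} × (Icc (-τ) (0 : ℝ)), ‖x p.1.1 (p.2 : ℝ)‖)
         (⨆ i : {i : Fin N // k ≤ (i : ℕ)}, ‖x i.1 0‖))
    (max (⨆ p : {j : Fin M // (j : ℕ) < h} × (Icc (-τ) (0 : ℝ)), ‖y p.1.1 (p.2 : ℝ)‖)
         (⨆ j : {j : Fin M // h ≤ (j : ℕ)}, ‖y j.1 0‖))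

/-- the minimum of an influence function on the ball of radius `C` (in each variable). -/
def minOnBall {d : ℕ} (C : ℝ)
    (f : EuclideanSpace ℝ (Fin d) → EuclideanSpace ℝ (Fin d) → ℝ) : ℝ :=
  ⨅ p : {z : EuclideanSpace ℝ (Fin d) × EuclideanSpace ℝ (Fin d) // ‖z.1‖ ≤ C ∧ ‖z.2‖ ≤ C},
    f p.1.1 p.1.2

/-- `Γ := min {ψ₀, ψ*₀, φ₀, φ*₀}`. -/
def Gam {d N M : ℕ} (h k : ℕ) (τ : ℝ)
    (ψ ψs φ φs : EuclideanSpace ℝ (Fin d) → EuclideanSpace ℝ (Fin d) → ℝ)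
    (x : Fin N → ℝ → EuclideanSpace ℝ (Fin d))
    (y : Fin M → ℝ → EuclideanSpace ℝ (Fin d)) : ℝ :=
  min (min (minOnBall (Cinit h k τ x y) ψ) (minOnBall (Cinit h k τ x y) ψs))
      (min (minOnBall (Cinit h k τ x y) φ) (minOnBall (Cinit h k τ x y) φs))

/-- `m_n` : minimum of the projections on `v` over the time mesh `I_n = [(6n-1)τ, 6nτ]`. -/
def mSeq {d N M : ℕ} (h k : ℕ) (τ : ℝ) (v : EuclideanSpace ℝ (Fin d))
    (x : Fin N → ℝ → EuclideanSpace ℝ (Fin d))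
    (y : Fin M → ℝ → EuclideanSpace ℝ (Fin d)) (n : ℕ) : ℝ :=
  min
    (min (⨅ p : {i : Fin N // (i : ℕ) < k} × (Icc ((6 * (n : ℝ) - 1) * τ) (6 * (n : ℝ) * τ)),
            ⟪x p.1.1 (p.2 : ℝ), v⟫)
         (⨅ i : {i : Fin N // k ≤ (i : ℕ)}, ⟪x i.1 (6 * (n : ℝ) * τ), v⟫))
    (min (⨅ p : {j : Fin M // (j : ℕ) < h} × (Icc ((6 * (n : ℝ) - 1) * τ) (6 * (n : ℝ) * τ)),
            ⟪y p.1.1 (p.2 : ℝ), v⟫)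
         (⨅ j : {j : Fin M // h ≤ (j : ℕ)}, ⟪y j.1 (6 * (n : ℝ) * τ), v⟫))

/-- `M_n` : maximum of the projections on `v` over the time mesh `I_n = [(6n-1)τ, 6nτ]`. -/
def MSeq {d N M : ℕ} (h k : ℕ) (τ : ℝ) (v : EuclideanSpace ℝ (Fin d))
    (x : Fin N → ℝ → EuclideanSpace ℝ (Fin d))
    (y : Fin M → ℝ → EuclideanSpace ℝ (Fin d)) (n : ℕ) : ℝ :=
  max
    (max (⨆ p : {i : Fin N // (i : ℕ) < k} × (Icc ((6 * (n : ℝ) - 1) * τ) (6 * (n : ℝ) * τ)),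
            ⟪x p.1.1 (p.2 : ℝ), v⟫)
         (⨆ i : {i : Fin N // k ≤ (i : ℕ)}, ⟪x i.1 (6 * (n : ℝ) * τ), v⟫))
    (max (⨆ p : {j : Fin M // (j : ℕ) < h} × (Icc ((6 * (n : ℝ) - 1) * τ) (6 * (n : ℝ) * τ)),
            ⟪y p.1.1 (p.2 : ℝ), v⟫)
         (⨆ j : {j : Fin M // h ≤ (j : ℕ)}, ⟪y j.1 (6 * (n : ℝ) * τ), v⟫))


section AuxHK
variable {E : Type*} [NormedAddCommGroup E] [InnerProductSpace ℝ E]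

lemma inner_sum_le' {ι : Type*} (s : Finset ι) (c : ι → ℝ) (w : ι → E) (u : E)
    (B R n : ℝ) (hcard : (s.card : ℝ) ≤ n) (hB : 0 ≤ B)
    (hc : ∀ j ∈ s, 0 ≤ c j ∧ c j ≤ B) (hw : ∀ j ∈ s, ‖w j‖ ≤ R) (hu : ‖u‖ ≤ R) :
    ⟪∑ j ∈ s, c j • (w j - u), u⟫ ≤ n * B * (R ^ 2 - ‖u‖ ^ 2) := by
  have hD : 0 ≤ R ^ 2 - ‖u‖ ^ 2 := by nlinarith [norm_nonneg u]
  rw [sum_inner]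
  have hterm : ∀ j ∈ s, ⟪c j • (w j - u), u⟫ ≤ B * (R ^ 2 - ‖u‖ ^ 2) := by
    intro j hj
    rw [real_inner_smul_left, inner_sub_left, real_inner_self_eq_norm_sq]
    have h1 : ⟪w j, u⟫ ≤ R * ‖u‖ := by
      refine (real_inner_le_norm _ _).trans ?_
      have := hw j hj
      nlinarith [norm_nonneg u]
    obtain ⟨hc0, hcB⟩ := hc j hj
    have h2 : ⟪w j, u⟫ - ‖u‖ ^ 2 ≤ R ^ 2 - ‖u‖ ^ 2 := by nlinarith [norm_nonneg u]
    nlinarith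
  calc ∑ j ∈ s, ⟪c j • (w j - u), u⟫ ≤ ∑ _j ∈ s, B * (R ^ 2 - ‖u‖ ^ 2) :=
        Finset.sum_le_sum hterm
    _ = (s.card : ℝ) * (B * (R ^ 2 - ‖u‖ ^ 2)) := by
        rw [Finset.sum_const, nsmul_eq_mul]
    _ ≤ n * (B * (R ^ 2 - ‖u‖ ^ 2)) := by
        apply mul_le_mul_of_nonneg_right hcard (by positivity)
    _ = n * B * (R ^ 2 - ‖u‖ ^ 2) := by ring

lemma gronwall_contra' (R K T C0 : ℝ) (hT : 0 < T)
    (u : ℝ → E) (hu : Continuous u) (h0 : ‖u 0‖ ≤ C0) (hC0R : C0 < R) (hC0 : 0 ≤ C0)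
    (hderiv : ∀ s ∈ Set.Ioo 0 T, ∃ v, HasDerivAt u v s ∧
       ⟪v, u s⟫ ≤ (K / 2) * (R ^ 2 - ‖u s‖ ^ 2)) :
    ‖u T‖ < R := by
  set φf : ℝ → ℝ := fun s => (⟪u s, u s⟫ - R ^ 2) * Real.exp (K * s) with hφf
  have hexp : ∀ s : ℝ, HasDerivAt (fun s => Real.exp (K * s)) (Real.exp (K * s) * K) s := by
    intro s
    simpa [mul_comm, Function.comp_def] using ((Real.hasDerivAt_exp (K * s)).comp s ((hasDerivAt_id s).const_mul K))
  have hder : ∀ s : ℝ, ∀ v : E, HasDerivAt u v s → HasDerivAt φf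
      ((⟪u s, v⟫ + ⟪v, u s⟫) * Real.exp (K * s) + (⟪u s, u s⟫ - R ^ 2) * (Real.exp (K * s) * K)) s := by
    intro s v hv
    exact ((hv.inner ℝ hv).sub_const (R ^ 2)).mul (hexp s)
  have hcont : Continuous φf := by
    exact ((hu.inner hu).sub continuous_const).mul (Real.continuous_exp.comp (continuous_const.mul continuous_id))
  have hmono : AntitoneOn φf (Set.Icc 0 T) := by
    apply antitoneOn_of_deriv_nonpos (convex_Icc 0 T) hcont.continuousOn
    · intro s hs
      rw [interior_Icc] at hs
      obtain ⟨v, hv, _⟩ := hderiv s hs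
      exact (hder s v hv).differentiableAt.differentiableWithinAt
    · intro s hs
      rw [interior_Icc] at hs
      obtain ⟨v, hv, hvb⟩ := hderiv s hs
      rw [(hder s v hv).deriv]
      have h1 : ⟪u s, v⟫ = ⟪v, u s⟫ := real_inner_comm _ _
      have h2 : ⟪u s, u s⟫ = ‖u s‖ ^ 2 := real_inner_self_eq_norm_sq _
      have h3 : 0 < Real.exp (K * s) := Real.exp_pos _
      rw [h1, h2]
      nlinarith
  have hT0 : φf T ≤ φf 0 := hmono ⟨le_refl 0, hT.le⟩ ⟨hT.le, le_refl T⟩ hT.le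
  have h00 : φf 0 < 0 := by
    have h2 : ⟪u 0, u 0⟫ = ‖u 0‖ ^ 2 := real_inner_self_eq_norm_sq _
    simp only [hφf, mul_zero, Real.exp_zero, mul_one, h2]
    nlinarith [norm_nonneg (u 0)]
  have hTneg : φf T < 0 := lt_of_le_of_lt hT0 h00
  have h4 : ⟪u T, u T⟫ = ‖u T‖ ^ 2 := real_inner_self_eq_norm_sq _
  have h5 : 0 < Real.exp (K * T) := Real.exp_pos _
  have h6 : ‖u T‖ ^ 2 < R ^ 2 := by
    by_contra hcc
    push_neg at hcc
    have : 0 ≤ φf T := by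
      simp only [hφf, h4]
      nlinarith
    linarith
  have hR : 0 ≤ R := le_trans hC0 hC0R.le
  exact lt_of_pow_lt_pow_left₀ 2 hR h6

end AuxHK

theorem stmt1
    (d N M h k : ℕ) (hd : 1 ≤ d) (hN : 2 ≤ N) (hM2 : 2 ≤ M) (hMN : M ≤ N)
    (hh1 : 1 ≤ h) (hhM : h < M) (hk1 : 1 ≤ k) (hkN : k < N)
    (τ : ℝ) (hτ : 0 < τ)
    (ψ ψs φ φs : EuclideanSpace ℝ (Fin d) → EuclideanSpace ℝ (Fin d) → ℝ)
    (hψ : Admissible ψ) (hψs : Admissible ψs) (hφ : Admissible φ) (hφs : Admissible φs)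
    (x : Fin N → ℝ → EuclideanSpace ℝ (Fin d)) (y : Fin M → ℝ → EuclideanSpace ℝ (Fin d))
    (hsol : IsSol h k τ ψ ψs φ φs x y)
    :
    (∀ i : Fin N, (i : ℕ) < k → ∀ t : ℝ, -τ ≤ t → ‖x i t‖ ≤ Cinit h k τ x y) ∧
    (∀ i : Fin N, k ≤ (i : ℕ) → ∀ t : ℝ, 0 ≤ t → ‖x i t‖ ≤ Cinit h k τ x y) ∧
    (∀ j : Fin M, (j : ℕ) < h → ∀ t : ℝ, -τ ≤ t → ‖y j t‖ ≤ Cinit h k τ x y) ∧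
    (∀ j : Fin M, h ≤ (j : ℕ) → ∀ t : ℝ, 0 ≤ t → ‖y j t‖ ≤ Cinit h k τ x y) := by
  classical
  haveI hNne : Nonempty (Fin N) := ⟨⟨0, by omega⟩⟩
  haveI hMne : Nonempty (Fin M) := ⟨⟨0, by omega⟩⟩
  set C := Cinit h k τ x y with hCdef
  -- boundedness of the initial-data suprema
  have hbxl : BddAbove (Set.range fun p : {i : Fin N // (i : ℕ) < k} × (Icc (-τ) (0:ℝ)) =>
      ‖x p.1.1 (p.2 : ℝ)‖) := by
    have hb : ∀ i : Fin N, ∃ b : ℝ, ∀ t ∈ Icc (-τ) (0:ℝ), ‖x i t‖ ≤ b := by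
      intro i
      obtain ⟨b, hb⟩ := (isCompact_Icc.image ((hsol.contx i).norm)).bddAbove
      exact ⟨b, fun t ht => hb ⟨t, ht, rfl⟩⟩
    choose b hb using hb
    refine ⟨Finset.univ.sup' Finset.univ_nonempty b, ?_⟩
    rintro r ⟨p, rfl⟩
    exact (hb p.1.1 (p.2 : ℝ) p.2.2).trans (Finset.le_sup' b (Finset.mem_univ _))
  have hbyl : BddAbove (Set.range fun p : {j : Fin M // (j : ℕ) < h} × (Icc (-τ) (0:ℝ)) =>
      ‖y p.1.1 (p.2 : ℝ)‖) := by
    have hb : ∀ j : Fin M, ∃ b : ℝ, ∀ t ∈ Icc (-τ) (0:ℝ), ‖y j t‖ ≤ b := by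
      intro j
      obtain ⟨b, hb⟩ := (isCompact_Icc.image ((hsol.conty j).norm)).bddAbove
      exact ⟨b, fun t ht => hb ⟨t, ht, rfl⟩⟩
    choose b hb using hb
    refine ⟨Finset.univ.sup' Finset.univ_nonempty b, ?_⟩
    rintro r ⟨p, rfl⟩
    exact (hb p.1.1 (p.2 : ℝ) p.2.2).trans (Finset.le_sup' b (Finset.mem_univ _))
  have hbxf : BddAbove (Set.range fun i : {i : Fin N // k ≤ (i : ℕ)} => ‖x i.1 0‖) :=
    Set.Finite.bddAbove (Set.finite_range _)
  have hbyf : BddAbove (Set.range fun j : {j : Fin M // h ≤ (j : ℕ)} => ‖y j.1 0‖) :=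
    Set.Finite.bddAbove (Set.finite_range _)
  -- bounds from the initial data
  have hx_lead_init : ∀ i : Fin N, (i : ℕ) < k → ∀ t ∈ Icc (-τ) (0:ℝ), ‖x i t‖ ≤ C := by
    intro i hi t ht
    have h1 : ‖x i t‖ ≤ ⨆ p : {i : Fin N // (i : ℕ) < k} × (Icc (-τ) (0:ℝ)),
        ‖x p.1.1 (p.2 : ℝ)‖ :=
      le_ciSup hbxl (⟨⟨i, hi⟩, ⟨t, ht⟩⟩ : {i : Fin N // (i : ℕ) < k} × (Icc (-τ) (0:ℝ)))
    refine h1.trans ?_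
    rw [hCdef]
    exact le_max_of_le_left (le_max_left _ _)
  have hy_lead_init : ∀ j : Fin M, (j : ℕ) < h → ∀ t ∈ Icc (-τ) (0:ℝ), ‖y j t‖ ≤ C := by
    intro j hj t ht
    have h1 : ‖y j t‖ ≤ ⨆ p : {j : Fin M // (j : ℕ) < h} × (Icc (-τ) (0:ℝ)),
        ‖y p.1.1 (p.2 : ℝ)‖ :=
      le_ciSup hbyl (⟨⟨j, hj⟩, ⟨t, ht⟩⟩ : {j : Fin M // (j : ℕ) < h} × (Icc (-τ) (0:ℝ)))
    refine h1.trans ?_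
    rw [hCdef]
    exact le_max_of_le_right (le_max_left _ _)
  have hx_foll_init : ∀ i : Fin N, k ≤ (i : ℕ) → ‖x i 0‖ ≤ C := by
    intro i hi
    have h1 : ‖x i 0‖ ≤ ⨆ i : {i : Fin N // k ≤ (i : ℕ)}, ‖x i.1 0‖ :=
      le_ciSup hbxf (⟨i, hi⟩ : {i : Fin N // k ≤ (i : ℕ)})
    refine h1.trans ?_
    rw [hCdef]
    exact le_max_of_le_left (le_max_right _ _)
  have hy_foll_init : ∀ j : Fin M, h ≤ (j : ℕ) → ‖y j 0‖ ≤ C := by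
    intro j hj
    have h1 : ‖y j 0‖ ≤ ⨆ j : {j : Fin M // h ≤ (j : ℕ)}, ‖y j.1 0‖ :=
      le_ciSup hbyf (⟨j, hj⟩ : {j : Fin M // h ≤ (j : ℕ)})
    refine h1.trans ?_
    rw [hCdef]
    exact le_max_of_le_right (le_max_right _ _)
  have hmem0 : (0:ℝ) ∈ Icc (-τ) (0:ℝ) := ⟨by linarith, le_refl 0⟩
  have hx0 : ∀ i : Fin N, ‖x i 0‖ ≤ C := by
    intro i
    rcases lt_or_ge (i : ℕ) k with hik | hik
    · exact hx_lead_init i hik 0 hmem0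
    · exact hx_foll_init i hik
  have hy0 : ∀ j : Fin M, ‖y j 0‖ ≤ C := by
    intro j
    rcases lt_or_ge (j : ℕ) h with hjh | hjh
    · exact hy_lead_init j hjh 0 hmem0
    · exact hy_foll_init j hjh
  have hC0 : 0 ≤ C := le_trans (norm_nonneg _) (hx0 ⟨0, by omega⟩)
  -- the uniform bound on the influence coefficients
  set B := max 1 (Lam ψ ψs φ φs) with hBdef
  have hB1 : (1:ℝ) ≤ B := le_max_left _ _
  have hB0 : (0:ℝ) ≤ B := by linarith
  have hψB : ∀ z₁ z₂, ψ z₁ z₂ ≤ B := by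
    intro z₁ z₂
    have h1 := le_ciSup hψ.2.2 ((z₁, z₂) : EuclideanSpace ℝ (Fin d) × EuclideanSpace ℝ (Fin d))
    refine h1.trans ?_
    rw [hBdef]
    exact le_max_of_le_right (le_max_of_le_left (le_max_left _ _))
  have hψsB : ∀ z₁ z₂, ψs z₁ z₂ ≤ B := by
    intro z₁ z₂
    have h1 := le_ciSup hψs.2.2 ((z₁, z₂) : EuclideanSpace ℝ (Fin d) × EuclideanSpace ℝ (Fin d))
    refine h1.trans ?_
    rw [hBdef]
    exact le_max_of_le_right (le_max_of_le_left (le_max_right _ _))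
  have hφB : ∀ z₁ z₂, φ z₁ z₂ ≤ B := by
    intro z₁ z₂
    have h1 := le_ciSup hφ.2.2 ((z₁, z₂) : EuclideanSpace ℝ (Fin d) × EuclideanSpace ℝ (Fin d))
    refine h1.trans ?_
    rw [hBdef]
    exact le_max_of_le_right (le_max_of_le_right (le_max_left _ _))
  have hφsB : ∀ z₁ z₂, φs z₁ z₂ ≤ B := by
    intro z₁ z₂
    have h1 := le_ciSup hφs.2.2 ((z₁, z₂) : EuclideanSpace ℝ (Fin d) × EuclideanSpace ℝ (Fin d))
    refine h1.trans ?_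
    rw [hBdef]
    exact le_max_of_le_right (le_max_of_le_right (le_max_right _ _))
  have hNr : (2:ℝ) ≤ (N:ℝ) := by exact_mod_cast hN
  have hMr : (2:ℝ) ≤ (M:ℝ) := by exact_mod_cast hM2
  have hhr : (1:ℝ) ≤ (h:ℝ) := by exact_mod_cast hh1
  have hkr : (1:ℝ) ≤ (k:ℝ) := by exact_mod_cast hk1
  have hden1 : (1:ℝ) ≤ (N:ℝ) + (h:ℝ) - 1 := by linarith
  have hden2 : (1:ℝ) ≤ (N:ℝ) - 1 := by linarith
  have hden3 : (1:ℝ) ≤ (M:ℝ) + (k:ℝ) - 1 := by linarith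
  have hden4 : (1:ℝ) ≤ (M:ℝ) - 1 := by linarith
  -- the key uniform-in-time bound, up to ε
  have key : ∀ ε : ℝ, 0 < ε → ∀ t : ℝ, 0 ≤ t →
      (∀ i : Fin N, ‖x i t‖ ≤ C + ε) ∧ (∀ j : Fin M, ‖y j t‖ ≤ C + ε) := by
    intro ε hε
    set R := C + ε with hRdef
    have hCR : C < R := by rw [hRdef]; linarith
    set S : Set ℝ :=
      {t | 0 ≤ t ∧ ((∃ i : Fin N, R ≤ ‖x i t‖) ∨ (∃ j : Fin M, R ≤ ‖y j t‖))} with hSdef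
    have hSempty : S = ∅ := by
      by_contra hne'
      have hne : S.Nonempty := Set.nonempty_iff_ne_empty.mpr hne'
      have hSclosed : IsClosed S := by
        have hSeq : S = Ici (0:ℝ) ∩
            ((⋃ i : Fin N, {t : ℝ | R ≤ ‖x i t‖}) ∪ ⋃ j : Fin M, {t : ℝ | R ≤ ‖y j t‖}) := by
          ext t
          constructor
          · rintro ⟨h1, h2⟩
            refine ⟨h1, ?_⟩
            rcases h2 with ⟨i, hi⟩ | ⟨j, hj⟩
            · exact Or.inl (Set.mem_iUnion.mpr ⟨i, hi⟩)
            · exact Or.inr (Set.mem_iUnion.mpr ⟨j, hj⟩)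
          · rintro ⟨h1, h2⟩
            refine ⟨h1, ?_⟩
            rcases h2 with hA | hB
            · obtain ⟨i, hi⟩ := Set.mem_iUnion.mp hA
              exact Or.inl ⟨i, hi⟩
            · obtain ⟨j, hj⟩ := Set.mem_iUnion.mp hB
              exact Or.inr ⟨j, hj⟩
        rw [hSeq]
        refine isClosed_Ici.inter (IsClosed.union ?_ ?_)
        · exact isClosed_iUnion_of_finite fun i =>
            isClosed_le continuous_const (hsol.contx i).norm
        · exact isClosed_iUnion_of_finite fun j =>
            isClosed_le continuous_const (hsol.conty j).norm
      have hSbdd : BddBelow S := ⟨0, fun t ht => ht.1⟩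
      set T := sInf S with hTdef
      have hTS : T ∈ S := hSclosed.csInf_mem hne hSbdd
      obtain ⟨hT1, hT2⟩ := hTS
      have hT0 : 0 < T := by
        rcases lt_or_eq_of_le hT1 with h' | h'
        · exact h'
        · exfalso
          rcases hT2 with ⟨i, hi⟩ | ⟨j, hj⟩
          · have := hx0 i; rw [← h'] at hi; linarith
          · have := hy0 j; rw [← h'] at hj; linarith
      have hlt : ∀ s : ℝ, 0 ≤ s → s < T →
          (∀ i : Fin N, ‖x i s‖ ≤ R) ∧ (∀ j : Fin M, ‖y j s‖ ≤ R) := by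
        intro s hs0 hsT
        have hnotS : s ∉ S := fun hsS => absurd (csInf_le hSbdd hsS) (not_le.mpr hsT)
        constructor
        · intro i
          by_contra hgt
          push_neg at hgt
          exact hnotS ⟨hs0, Or.inl ⟨i, hgt.le⟩⟩
        · intro j
          by_contra hgt
          push_neg at hgt
          exact hnotS ⟨hs0, Or.inr ⟨j, hgt.le⟩⟩
      have hallIcc : ∀ s ∈ Icc (0:ℝ) T,
          (∀ i : Fin N, ‖x i s‖ ≤ R) ∧ (∀ j : Fin M, ‖y j s‖ ≤ R) := by
        intro s hs
        rcases eq_or_lt_of_le hs.2 with h' | h'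
        · constructor
          · intro i
            rw [h']
            have htt : Tendsto (fun r => ‖x i r‖) (𝓝[<] T) (𝓝 ‖x i T‖) :=
              tendsto_nhdsWithin_of_tendsto_nhds ((hsol.contx i).tendsto T).norm
            refine le_of_tendsto htt ?_
            filter_upwards [Ioo_mem_nhdsLT hT0] with r hr
            exact (hlt r hr.1.le hr.2).1 i
          · intro j
            rw [h']
            have htt : Tendsto (fun r => ‖y j r‖) (𝓝[<] T) (𝓝 ‖y j T‖) :=
              tendsto_nhdsWithin_of_tendsto_nhds ((hsol.conty j).tendsto T).norm
            refine le_of_tendsto htt ?_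
            filter_upwards [Ioo_mem_nhdsLT hT0] with r hr
            exact (hlt r hr.1.le hr.2).2 j
        · exact hlt s hs.1 h'
      have hdelx : ∀ s : ℝ, 0 < s → s ≤ T → ∀ j : Fin N, (j : ℕ) < k → ‖x j (s - τ)‖ ≤ R := by
        intro s hs0 hsT j hj
        rcases le_or_gt (s - τ) 0 with hle | hpos
        · exact (hx_lead_init j hj (s - τ) ⟨by linarith, hle⟩).trans hCR.le
        · exact (hallIcc (s - τ) ⟨hpos.le, by linarith⟩).1 j
      have hdely : ∀ s : ℝ, 0 < s → s ≤ T → ∀ j : Fin M, (j : ℕ) < h → ‖y j (s - τ)‖ ≤ R := by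
        intro s hs0 hsT j hj
        rcases le_or_gt (s - τ) 0 with hle | hpos
        · exact (hy_lead_init j hj (s - τ) ⟨by linarith, hle⟩).trans hCR.le
        · exact (hallIcc (s - τ) ⟨hpos.le, by linarith⟩).2 j
      set K : ℝ := 2 * ((N:ℝ) + (M:ℝ)) * B with hKdef
      have hNM0 : (0:ℝ) ≤ (M:ℝ) := by positivity
      have hNM0' : (0:ℝ) ≤ (N:ℝ) := by positivity
      rcases hT2 with ⟨i, hi⟩ | ⟨j, hj⟩
      · rcases lt_or_ge (i : ℕ) k with hik | hik
        · -- x-leader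
          have hcontr : ‖x i T‖ < R := by
            refine gronwall_contra' R K T C hT0 (x i) (hsol.contx i) (hx0 i) hCR hC0 ?_
            intro s hs
            refine ⟨_, hsol.odex_lead i hik s hs.1, ?_⟩
            have hsIcc : s ∈ Icc (0:ℝ) T := ⟨hs.1.le, hs.2.le⟩
            have hu : ‖x i s‖ ≤ R := (hallIcc s hsIcc).1 i
            rw [inner_add_left]
            have hcard1 : ((Finset.univ.erase i).card : ℝ) ≤ (N:ℝ) := by
              have h1 : (Finset.univ.erase i).card ≤ N := by
                refine le_trans (Finset.card_le_univ _) ?_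
                simp [Fintype.card_fin]
              exact_mod_cast h1
            have hb1 := inner_sum_le' (Finset.univ.erase i)
              (fun j => ψ (x i s) (x j s) / ((N:ℝ) + (h:ℝ) - 1))
              (fun j => x j s) (x i s) B R (N:ℝ) hcard1 hB0
              (fun j _ => ⟨div_nonneg (hψ.2.1 _ _).le (by linarith),
                (div_le_self (hψ.2.1 _ _).le hden1).trans (hψB _ _)⟩)
              (fun j _ => (hallIcc s hsIcc).1 j) hu
            have hcard2 : ((Finset.univ.filter fun j : Fin M => (j : ℕ) < h).card : ℝ) ≤ (M:ℝ) := by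
              have h1 : (Finset.univ.filter fun j : Fin M => (j : ℕ) < h).card ≤ M := by
                refine le_trans (Finset.card_filter_le _ _) ?_
                simp [Fintype.card_fin]
              exact_mod_cast h1
            have hb2 := inner_sum_le' (Finset.univ.filter fun j : Fin M => (j : ℕ) < h)
              (fun j => φ (x i s) (y j (s - τ)) / ((N:ℝ) + (h:ℝ) - 1))
              (fun j => y j (s - τ)) (x i s) B R (M:ℝ) hcard2 hB0
              (fun j _ => ⟨div_nonneg (hφ.2.1 _ _).le (by linarith),
                (div_le_self (hφ.2.1 _ _).le hden1).trans (hφB _ _)⟩)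
              (fun j hjmem => hdely s hs.1 hs.2.le j (Finset.mem_filter.mp hjmem).2) hu
            refine (add_le_add hb1 hb2).trans (le_of_eq ?_)
            rw [hKdef]; ring
          linarith
        · -- x-follower
          have hcontr : ‖x i T‖ < R := by
            refine gronwall_contra' R K T C hT0 (x i) (hsol.contx i) (hx0 i) hCR hC0 ?_
            intro s hs
            refine ⟨_, hsol.odex_foll i hik s hs.1, ?_⟩
            have hsIcc : s ∈ Icc (0:ℝ) T := ⟨hs.1.le, hs.2.le⟩
            have hu : ‖x i s‖ ≤ R := (hallIcc s hsIcc).1 i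
            have hcard1 : ((Finset.univ.erase i).card : ℝ) ≤ (N:ℝ) + (M:ℝ) := by
              have h1 : (Finset.univ.erase i).card ≤ N := by
                refine le_trans (Finset.card_le_univ _) ?_
                simp [Fintype.card_fin]
              have h2 : ((Finset.univ.erase i).card : ℝ) ≤ (N:ℝ) := by exact_mod_cast h1
              linarith
            have hb1 := inner_sum_le' (Finset.univ.erase i)
              (fun j => ψ (x i s) (x j s) / ((N:ℝ) - 1))
              (fun j => x j s) (x i s) B R ((N:ℝ) + (M:ℝ)) hcard1 hB0
              (fun j _ => ⟨div_nonneg (hψ.2.1 _ _).le (by linarith),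
                (div_le_self (hψ.2.1 _ _).le hden2).trans (hψB _ _)⟩)
              (fun j _ => (hallIcc s hsIcc).1 j) hu
            refine hb1.trans (le_of_eq ?_)
            rw [hKdef]; ring
          linarith
      · rcases lt_or_ge (j : ℕ) h with hjh | hjh
        · -- y-leader
          have hcontr : ‖y j T‖ < R := by
            refine gronwall_contra' R K T C hT0 (y j) (hsol.conty j) (hy0 j) hCR hC0 ?_
            intro s hs
            refine ⟨_, hsol.odey_lead j hjh s hs.1, ?_⟩
            have hsIcc : s ∈ Icc (0:ℝ) T := ⟨hs.1.le, hs.2.le⟩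
            have hu : ‖y j s‖ ≤ R := (hallIcc s hsIcc).2 j
            rw [inner_add_left]
            have hcard1 : ((Finset.univ.erase j).card : ℝ) ≤ (M:ℝ) := by
              have h1 : (Finset.univ.erase j).card ≤ M := by
                refine le_trans (Finset.card_le_univ _) ?_
                simp [Fintype.card_fin]
              exact_mod_cast h1
            have hb1 := inner_sum_le' (Finset.univ.erase j)
              (fun j' => ψs (y j s) (y j' s) / ((M:ℝ) + (k:ℝ) - 1))
              (fun j' => y j' s) (y j s) B R (M:ℝ) hcard1 hB0
              (fun j' _ => ⟨div_nonneg (hψs.2.1 _ _).le (by linarith),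
                (div_le_self (hψs.2.1 _ _).le hden3).trans (hψsB _ _)⟩)
              (fun j' _ => (hallIcc s hsIcc).2 j') hu
            have hcard2 : ((Finset.univ.filter fun j' : Fin N => (j' : ℕ) < k).card : ℝ) ≤ (N:ℝ) := by
              have h1 : (Finset.univ.filter fun j' : Fin N => (j' : ℕ) < k).card ≤ N := by
                refine le_trans (Finset.card_filter_le _ _) ?_
                simp [Fintype.card_fin]
              exact_mod_cast h1
            have hb2 := inner_sum_le' (Finset.univ.filter fun j' : Fin N => (j' : ℕ) < k)
              (fun j' => φs (y j s) (x j' (s - τ)) / ((M:ℝ) + (k:ℝ) - 1))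
              (fun j' => x j' (s - τ)) (y j s) B R (N:ℝ) hcard2 hB0
              (fun j' _ => ⟨div_nonneg (hφs.2.1 _ _).le (by linarith),
                (div_le_self (hφs.2.1 _ _).le hden3).trans (hφsB _ _)⟩)
              (fun j' hjmem => hdelx s hs.1 hs.2.le j' (Finset.mem_filter.mp hjmem).2) hu
            refine (add_le_add hb1 hb2).trans (le_of_eq ?_)
            rw [hKdef]; ring
          linarith
        · -- y-follower
          have hcontr : ‖y j T‖ < R := by
            refine gronwall_contra' R K T C hT0 (y j) (hsol.conty j) (hy0 j) hCR hC0 ?_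
            intro s hs
            refine ⟨_, hsol.odey_foll j hjh s hs.1, ?_⟩
            have hsIcc : s ∈ Icc (0:ℝ) T := ⟨hs.1.le, hs.2.le⟩
            have hu : ‖y j s‖ ≤ R := (hallIcc s hsIcc).2 j
            have hcard1 : ((Finset.univ.erase j).card : ℝ) ≤ (N:ℝ) + (M:ℝ) := by
              have h1 : (Finset.univ.erase j).card ≤ M := by
                refine le_trans (Finset.card_le_univ _) ?_
                simp [Fintype.card_fin]
              have h2 : ((Finset.univ.erase j).card : ℝ) ≤ (M:ℝ) := by exact_mod_cast h1
              linarith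
            have hb1 := inner_sum_le' (Finset.univ.erase j)
              (fun j' => ψs (y j s) (y j' s) / ((M:ℝ) - 1))
              (fun j' => y j' s) (y j s) B R ((N:ℝ) + (M:ℝ)) hcard1 hB0
              (fun j' _ => ⟨div_nonneg (hψs.2.1 _ _).le (by linarith),
                (div_le_self (hψs.2.1 _ _).le hden4).trans (hψsB _ _)⟩)
              (fun j' _ => (hallIcc s hsIcc).2 j') hu
            refine hb1.trans (le_of_eq ?_)
            rw [hKdef]; ring
          linarith
    intro t ht
    constructor
    · intro i
      by_contra hgt
      push_neg at hgt
      have hmem : t ∈ S := ⟨ht, Or.inl ⟨i, hgt.le⟩⟩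
      rw [hSempty] at hmem
      exact hmem
    · intro j
      by_contra hgt
      push_neg at hgt
      have hmem : t ∈ S := ⟨ht, Or.inr ⟨j, hgt.le⟩⟩
      rw [hSempty] at hmem
      exact hmem
  refine ⟨?_, ?_, ?_, ?_⟩
  · intro i hi t ht
    rcases le_or_gt t 0 with h' | h'
    · exact hx_lead_init i hi t ⟨ht, h'⟩
    · exact le_of_forall_pos_le_add fun ε hε => (key ε hε t h'.le).1 i
  · intro i _ t ht
    exact le_of_forall_pos_le_add fun ε hε => (key ε hε t ht).1 i
  · intro j hj t ht
    rcases le_or_gt t 0 with h' | h'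
    · exact hy_lead_init j hj t ⟨ht, h'⟩
    · exact le_of_forall_pos_le_add fun ε hε => (key ε hε t h'.le).2 j
  · intro j _ t ht
    exact le_of_forall_pos_le_add fun ε hε => (key ε hε t ht).2 j
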